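/- Let V be a 2-dimensional vector space over ℂ with basis e₁, e₂, and let G ⊆ GL₂(ℂ) be the group of unipotent upper-triangular matrices [[1, α],[0,1]], α ∈ ℂ, acting diagonally on Vᵐ. Then the algebra of G-invariant polynomials ℂ[x_{r1}, x_{r2} : 1 ≤ r ≤ m]^G is generated by 1, the coordinates x_{12}, …, x_{m2}, and the determinants x_{r1}x_{s2} − x_{r2}x_{s1} for 1 ≤ r < s ≤ m. -/

import Mathlib

open MvPolynomial Finset

noncomputable section
namespace UnipotentAux

variable {m : ℕ}

abbrev Rm (m : ℕ) := MvPolynomial (Fin m × Fin 2) ℂ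

def Agen (m : ℕ) : Set (Rm m) :=
  (Set.range fun r : Fin m => (X (r, 1) : Rm m)) ∪
    {q | ∃ r s : Fin m, r < s ∧ q = X (r, 0) * X (s, 1) - X (r, 1) * X (s, 0)}

abbrev AA (m : ℕ) : Subalgebra ℂ (Rm m) := Algebra.adjoin ℂ (Agen m)

def ww : Fin m × Fin 2 → ℕ × ℕ := fun p => if p.2 = 0 then (1, 0) else (0, 1)

lemma pderiv_pderiv_comm {σ : Type*} {R : Type*} [CommSemiring R] (i j : σ)
    (p : MvPolynomial σ R) : pderiv i (pderiv j p) = pderiv j (pderiv i p) := by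
  classical
  induction p using MvPolynomial.induction_on with
  | C c => simp [pderiv_C]
  | add p q hp hq => simp [map_add, hp, hq]
  | mul_X p k hp =>
      have hzero : ∀ a b : σ, pderiv a (pderiv b (X k : MvPolynomial σ R)) = 0 := by
        intro a b
        by_cases h : k = b
        · subst h; rw [pderiv_X_self]; exact pderiv_one
        · rw [pderiv_X_of_ne h, map_zero]
      rw [pderiv_mul, map_add, pderiv_mul, pderiv_mul, hzero, mul_zero, add_zero,
          pderiv_mul, map_add, pderiv_mul, pderiv_mul, hzero, mul_zero, add_zero, hp]
      ring

lemma weight_ww (d : Fin m × Fin 2 →₀ ℕ) :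
    (Finsupp.weight ww) d = (∑ r, d (r, 0), ∑ r, d (r, 1)) := by
  rw [Finsupp.weight_apply, Finsupp.sum_fintype]
  · rw [Fintype.sum_prod_type]
    have : ∀ r : Fin m, ∑ i : Fin 2, d (r, i) • ww (r, i) = (d (r,0), d (r,1)) := by
      intro r
      rw [Fin.sum_univ_two]
      simp [ww, Prod.ext_iff]
    simp only [this]
    apply Prod.ext <;> simp [Prod.fst_sum, Prod.snd_sum]
  · intro p; simp

lemma X_mul_pderiv_monomial {σ : Type*} [DecidableEq σ] (p : σ) (d : σ →₀ ℕ) (c : ℂ) :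
    (X p : MvPolynomial σ ℂ) * pderiv p (monomial d c) = d p • monomial d c := by
  rw [pderiv_monomial]
  by_cases h : d p = 0
  · simp [h]
  · have hle : Finsupp.single p 1 ≤ d := by
      rw [Finsupp.single_le_iff]; omega
    rw [X, monomial_mul, one_mul, add_tsub_cancel_of_le hle, smul_monomial]
    congr 1
    rw [nsmul_eq_mul]; ring

lemma euler (i : Fin 2) (n : ℕ) (f : Rm m) (h : ∀ d ∈ f.support, ∑ r, d (r, i) = n) :
    ∑ r : Fin m, (X (r, i) : Rm m) * pderiv (r, i) f = n • f := by
  classical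
  rw [as_sum f]
  have : ∀ r : Fin m, (X (r, i) : Rm m) * pderiv (r, i) (∑ d ∈ f.support, monomial d (coeff d f))
      = ∑ d ∈ f.support, d (r, i) • monomial d (coeff d f) := by
    intro r
    rw [map_sum, mul_sum]
    exact Finset.sum_congr rfl fun d _ => X_mul_pderiv_monomial _ _ _
  rw [Finset.sum_congr rfl fun r _ => this r, Finset.sum_comm, smul_sum]
  refine Finset.sum_congr rfl fun d hd => ?_
  rw [← Finset.sum_smul]
  have hsum : ∀ r : Fin m, ((fun q : Fin m × Fin 2 => d q) (r, i)) = d (r,i) := fun _ => rfl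
  rw [h d hd]

lemma sum_u_of_wh {f : Rm m} {a b : ℕ} (h : IsWeightedHomogeneous ww f (a, b)) :
    ∀ d ∈ f.support, ∑ r, d (r, 0) = a := by
  intro d hd
  have := h (mem_support_iff.mp hd)
  rw [weight_ww] at this
  exact congrArg Prod.fst this

lemma sum_v_of_wh {f : Rm m} {a b : ℕ} (h : IsWeightedHomogeneous ww f (a, b)) :
    ∀ d ∈ f.support, ∑ r, d (r, 1) = b := by
  intro d hd
  have := h (mem_support_iff.mp hd)
  rw [weight_ww] at this
  exact congrArg Prod.snd this

lemma pderiv_zero_of_wh {f : Rm m} (i : Fin 2)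
    (h : ∀ d ∈ f.support, ∑ r, d (r, i) = 0) (s : Fin m) : pderiv (s, i) f = 0 := by
  classical
  rw [as_sum f, map_sum]
  refine Finset.sum_eq_zero fun d hd => ?_
  have : d (s, i) = 0 := by
    have h0 := h d hd
    have : d (s, i) ≤ ∑ r, d (r, i) :=
      Finset.single_le_sum (f := fun r : Fin m => d (r, i)) (fun _ _ => Nat.zero_le _) (mem_univ s)
    omega
  simp [pderiv_monomial, this]

lemma wh_pderiv {f : Rm m} {n : ℕ × ℕ} (p : Fin m × Fin 2)
    (h : IsWeightedHomogeneous ww f (n + ww p)) :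
    IsWeightedHomogeneous ww (pderiv p f) n := by
  classical
  rw [← mem_weightedHomogeneousSubmodule]
  rw [as_sum f, map_sum]
  refine Submodule.sum_mem _ fun d hd => ?_
  rw [pderiv_monomial]
  by_cases hdp : d p = 0
  · have : (monomial (d - Finsupp.single p 1)) (coeff d f * (d p : ℂ)) = 0 := by simp [hdp]
    rw [this]; exact Submodule.zero_mem _
  · rw [mem_weightedHomogeneousSubmodule]
    apply isWeightedHomogeneous_monomial
    have hle : Finsupp.single p 1 ≤ d := by rw [Finsupp.single_le_iff]; omega
    have hadd : (d - Finsupp.single p 1) + Finsupp.single p 1 = d := tsub_add_cancel_of_le hle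
    have h1 : (Finsupp.weight ww) (Finsupp.single p 1) = ww p := by
      rw [Finsupp.weight_apply, Finsupp.sum_single_index] <;> simp
    have hw : (Finsupp.weight ww) (d - Finsupp.single p 1) + ww p = n + ww p := by
      calc (Finsupp.weight ww) (d - Finsupp.single p 1) + ww p
          = (Finsupp.weight ww) (d - Finsupp.single p 1)
            + (Finsupp.weight ww) (Finsupp.single p 1) := by rw [h1]
        _ = (Finsupp.weight ww) d := by rw [← map_add, hadd]
        _ = n + ww p := h (mem_support_iff.mp hd)
    exact add_right_cancel hw

def DD (m : ℕ) : Rm m →ₗ[ℂ] Rm m :=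
  ∑ r : Fin m, (LinearMap.mulLeft ℂ (X (r, 1) : Rm m)).comp
    (pderiv (R := ℂ) ((r, 0) : Fin m × Fin 2)).toLinearMap

lemma DD_apply (f : Rm m) : DD m f = ∑ r : Fin m, X (r, 1) * pderiv (r, 0) f := by
  simp [DD]

def Om (r s : Fin m) (f : Rm m) : Rm m :=
  pderiv (r, 0) (pderiv (s, 1) f) - pderiv (r, 1) (pderiv (s, 0) f)

lemma pderiv_DDsum (i : Fin m × Fin 2) (g : Rm m) :
    pderiv i (∑ t : Fin m, (X (t, 1) : Rm m) * pderiv (t, 0) g)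
      = (∑ t : Fin m, (X (t, 1) : Rm m) * pderiv (t, 0) (pderiv i g)) +
        (if i.2 = 1 then pderiv (i.1, 0) g else 0) := by
  classical
  rw [map_sum]
  have hterm : ∀ t : Fin m, pderiv i ((X (t, 1) : Rm m) * pderiv (t, 0) g)
      = X (t, 1) * pderiv (t, 0) (pderiv i g) + (if ((t, 1) : Fin m × Fin 2) = i then pderiv (t, 0) g else 0) := by
    intro t
    rw [pderiv_mul]
    rw [add_comm]
    refine congrArg₂ (· + ·) ?_ ?_
    · rw [pderiv_pderiv_comm]
    · by_cases h : ((t, 1) : Fin m × Fin 2) = i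
      · rw [if_pos h, ← h, pderiv_X_self, one_mul]
      · rw [if_neg h, pderiv_X_of_ne h, zero_mul]
  rw [Finset.sum_congr rfl fun t _ => hterm t, Finset.sum_add_distrib]
  refine congrArg₂ (· + ·) rfl ?_
  by_cases h : i.2 = 1
  · obtain ⟨i1, i2⟩ := i
    simp only at h
    subst h
    rw [if_pos rfl]
    have : ∀ t : Fin m, (((t, 1) : Fin m × Fin 2) = (i1, 1)) = (t = i1) := by
      intro t; simp [Prod.ext_iff]
    simp only [this]
    rw [Finset.sum_ite_eq' univ i1 (fun t => pderiv ((t, 0) : Fin m × Fin 2) g)]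
    simp
  · rw [if_neg h]
    refine Finset.sum_eq_zero fun t _ => ?_
    rw [if_neg (by rintro rfl; exact h rfl)]

lemma DD_Om (r s : Fin m) (f : Rm m) : DD m (Om r s f) = Om r s (DD m f) := by
  rw [DD_apply, Om, Om, DD_apply, pderiv_DDsum (s, 1) f, pderiv_DDsum (s, 0) f]
  rw [if_pos rfl, if_neg (by simp), add_zero]
  rw [map_add, pderiv_DDsum ((r, 0) : Fin m × Fin 2) (pderiv (s, 1) f),
    pderiv_DDsum ((r, 1) : Fin m × Fin 2) (pderiv (s, 0) f)]
  rw [if_neg (by simp), add_zero, if_pos rfl]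
  simp only [map_sub, mul_sub, Finset.sum_sub_distrib]
  abel

lemma Om_swap (r s : Fin m) (f : Rm m) : Om s r f = -(Om r s f) := by
  rw [Om, Om, pderiv_pderiv_comm ((s, 0) : Fin m × Fin 2) ((r, 1) : Fin m × Fin 2) f,
    pderiv_pderiv_comm ((s, 1) : Fin m × Fin 2) ((r, 0) : Fin m × Fin 2) f]
  ring

lemma Om_P (r s : Fin m) (f : Rm m) :
    Om r s f = pderiv (s, 1) (pderiv (r, 0) f) - pderiv (s, 0) (pderiv (r, 1) f) := by
  rw [Om, pderiv_pderiv_comm ((r, 0) : Fin m × Fin 2) ((s, 1) : Fin m × Fin 2) f,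
    pderiv_pderiv_comm ((r, 1) : Fin m × Fin 2) ((s, 0) : Fin m × Fin 2) f]

lemma capelli (a b : ℕ) (f : Rm m) (hf : IsWeightedHomogeneous ww f (a + 1, b))
    (hD : DD m f = 0) :
    ((((a + 1) * (b + 1) : ℕ)) : ℂ) • f =
      ∑ q ∈ univ.filter (fun q : Fin m × Fin m => q.1 < q.2),
        (X (q.1, 0) * X (q.2, 1) - X (q.1, 1) * X (q.2, 0)) * Om q.1 q.2 f := by
  classical
  have hfr : ∀ r : Fin m, IsWeightedHomogeneous ww (pderiv ((r, 0) : Fin m × Fin 2) f) (a, b) := by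
    intro r
    apply wh_pderiv
    have h1 : ((a, b) : ℕ × ℕ) + ww ((r, 0) : Fin m × Fin 2) = (a + 1, b) := by
      simp [ww, Prod.ext_iff]
    rw [h1]; exact hf
  have hu : ∑ r : Fin m, (X (r, 0) : Rm m) * pderiv (r, 0) f = (a + 1) • f :=
    euler 0 (a + 1) f (sum_u_of_wh hf)
  have hv : ∀ r : Fin m, ∑ s : Fin m, (X (s, 1) : Rm m) * pderiv (s, 1) (pderiv (r, 0) f)
      = b • pderiv ((r, 0) : Fin m × Fin 2) f := fun r => euler 1 b _ (sum_v_of_wh (hfr r))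
  set P1 : Fin m × Fin m → Rm m := fun q => pderiv (q.2, 1) (pderiv (q.1, 0) f) with hP1
  set P2 : Fin m × Fin m → Rm m := fun q => pderiv (q.2, 0) (pderiv (q.1, 1) f) with hP2
  have hS1 : ∑ q : Fin m × Fin m, X (q.1, 0) * X (q.2, 1) * P1 q = ((a + 1) * b) • f := by
    rw [Fintype.sum_prod_type]
    have h2 : ∀ r : Fin m, ∑ s : Fin m, X ((r, 0) : Fin m × Fin 2) * X (s, 1) * P1 (r, s)
        = X ((r, 0) : Fin m × Fin 2) * (b • pderiv ((r, 0) : Fin m × Fin 2) f) := by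
      intro r
      rw [← hv r, mul_sum]
      exact Finset.sum_congr rfl fun s _ => by rw [mul_assoc]
    rw [Finset.sum_congr rfl fun r _ => h2 r]
    calc ∑ r : Fin m, X ((r, 0) : Fin m × Fin 2) * (b • pderiv ((r, 0) : Fin m × Fin 2) f)
        = b • ∑ r : Fin m, X ((r, 0) : Fin m × Fin 2) * pderiv ((r, 0) : Fin m × Fin 2) f := by
          rw [smul_sum]; exact Finset.sum_congr rfl fun r _ => (mul_smul_comm _ _ _)
      _ = b • ((a + 1) • f) := by rw [hu]
      _ = ((a + 1) * b) • f := by rw [smul_smul, mul_comm]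
  have hinner : ∀ r : Fin m, ∑ s : Fin m, (X (s, 1) : Rm m) * pderiv (s, 0) (pderiv (r, 1) f)
      = -(pderiv ((r, 0) : Fin m × Fin 2) f) := by
    intro r
    have h0 := pderiv_DDsum ((r, 1) : Fin m × Fin 2) f
    rw [← DD_apply, hD, map_zero, if_pos rfl] at h0
    exact eq_neg_of_add_eq_zero_left h0.symm
  have hS2 : ∑ q : Fin m × Fin m, X (q.1, 0) * X (q.2, 1) * P2 q
      = -(((a + 1) • f : Rm m)) := by
    rw [Fintype.sum_prod_type]
    have h2 : ∀ r : Fin m, ∑ s : Fin m, X ((r, 0) : Fin m × Fin 2) * X (s, 1) * P2 (r, s)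
        = X ((r, 0) : Fin m × Fin 2) * -(pderiv ((r, 0) : Fin m × Fin 2) f) := by
      intro r; rw [← hinner r, mul_sum]
      exact Finset.sum_congr rfl fun s _ => by rw [mul_assoc]
    rw [Finset.sum_congr rfl fun r _ => h2 r, ← hu]
    rw [← Finset.sum_neg_distrib]
    exact Finset.sum_congr rfl fun r _ => by ring
  set G : Fin m × Fin m → Rm m :=
    fun q => (X (q.1, 0) * X (q.2, 1) - X (q.1, 1) * X (q.2, 0)) * Om q.1 q.2 f with hG
  have hGdiag : ∀ q : Fin m × Fin m, q.1 = q.2 → G q = 0 := by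
    intro q h; rw [hG]; simp only; rw [h]; ring
  have hGswap : ∀ q : Fin m × Fin m, G q.swap = G q := by
    intro q
    simp only [hG, Prod.fst_swap, Prod.snd_swap]
    rw [Om_swap]; ring
  have hsplit : ∑ q : Fin m × Fin m, G q
      = (∑ q ∈ univ.filter (fun q : Fin m × Fin m => q.1 < q.2), G q) +
        ∑ q ∈ univ.filter (fun q : Fin m × Fin m => q.1 < q.2), G q := by
    rw [← Finset.sum_filter_add_sum_filter_not univ (fun q : Fin m × Fin m => q.1 < q.2) G]
    congr 1
    have hsub : ∑ q ∈ univ.filter (fun q : Fin m × Fin m => ¬ q.1 < q.2), G q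
        = ∑ q ∈ univ.filter (fun q : Fin m × Fin m => q.2 < q.1), G q := by
      refine (Finset.sum_subset ?_ ?_).symm
      · intro q hq
        simp only [mem_filter, mem_univ, true_and] at hq ⊢
        exact lt_asymm hq
      · intro q hq hnq
        simp only [mem_filter, mem_univ, true_and] at hq hnq
        exact hGdiag q (le_antisymm (not_lt.mp hnq) (not_lt.mp hq))
    rw [hsub]
    refine Finset.sum_nbij' Prod.swap Prod.swap ?_ ?_ ?_ ?_ ?_
    · intro q hq; simp only [mem_filter, mem_univ, true_and] at hq ⊢; exact hq
    · intro q hq; simp only [mem_filter, mem_univ, true_and] at hq ⊢; exact hq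
    · intro q _; exact Prod.swap_swap q
    · intro q _; exact Prod.swap_swap q
    · intro q _; exact (hGswap q).symm
  have hexpand : ∑ q : Fin m × Fin m, G q
      = (∑ q : Fin m × Fin m, X (q.1, 0) * X (q.2, 1) * P1 q)
        - (∑ q : Fin m × Fin m, X (q.1, 0) * X (q.2, 1) * P2 q)
        - (∑ q : Fin m × Fin m, X (q.1, 1) * X (q.2, 0) * P1 q)
        + (∑ q : Fin m × Fin m, X (q.1, 1) * X (q.2, 0) * P2 q) := by
    rw [← Finset.sum_sub_distrib, ← Finset.sum_sub_distrib, ← Finset.sum_add_distrib]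
    refine Finset.sum_congr rfl fun q _ => ?_
    rw [hG]
    simp only
    rw [Om_P, hP1, hP2]
    simp only
    ring
  have hswap3 : ∑ q : Fin m × Fin m, X (q.1, 1) * X (q.2, 0) * P1 q
      = ∑ q : Fin m × Fin m, X (q.1, 0) * X (q.2, 1) * P2 q := by
    refine Fintype.sum_equiv (Equiv.prodComm (Fin m) (Fin m)) _ _ fun q => ?_
    simp only [Equiv.prodComm_apply, Prod.fst_swap, Prod.snd_swap, hP1, hP2]
    rw [pderiv_pderiv_comm]
    ring
  have hswap4 : ∑ q : Fin m × Fin m, X (q.1, 1) * X (q.2, 0) * P2 q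
      = ∑ q : Fin m × Fin m, X (q.1, 0) * X (q.2, 1) * P1 q := by
    refine Fintype.sum_equiv (Equiv.prodComm (Fin m) (Fin m)) _ _ fun q => ?_
    simp only [Equiv.prodComm_apply, Prod.fst_swap, Prod.snd_swap, hP1, hP2]
    rw [pderiv_pderiv_comm]
    ring
  have htot : (∑ q ∈ univ.filter (fun q : Fin m × Fin m => q.1 < q.2), G q) +
        ∑ q ∈ univ.filter (fun q : Fin m × Fin m => q.1 < q.2), G q
      = (((a + 1) * b) • f + ((a + 1) * b) • f) + ((a + 1) • f + (a + 1) • f) := by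
    rw [← hsplit, hexpand, hswap3, hswap4, hS1, hS2]
    abel
  have h2 : (∑ q ∈ univ.filter (fun q : Fin m × Fin m => q.1 < q.2), G q) +
        ∑ q ∈ univ.filter (fun q : Fin m × Fin m => q.1 < q.2), G q
      = ((((a + 1) * (b + 1) : ℕ)) : ℂ) • f + ((((a + 1) * (b + 1) : ℕ)) : ℂ) • f := by
    rw [htot]
    have : ∀ (n : ℕ), (n • f : Rm m) = ((n : ℂ)) • f := fun n =>
      (Nat.cast_smul_eq_nsmul ℂ n f).symm
    simp only [this]
    push_cast
    module
  have hfin := h2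
  have : (2 : ℂ) • (∑ q ∈ univ.filter (fun q : Fin m × Fin m => q.1 < q.2), G q)
      = (2 : ℂ) • (((((a + 1) * (b + 1) : ℕ)) : ℂ) • f) := by
    rw [two_smul, two_smul]; exact hfin
  have h3 := congrArg (fun z => (2 : ℂ)⁻¹ • z) this
  simpa [smul_smul] using h3.symm

lemma wh_DD {f : Rm m} {a b : ℕ} (h : IsWeightedHomogeneous ww f (a + 1, b)) :
    IsWeightedHomogeneous ww (DD m f) (a, b + 1) := by
  rw [DD_apply, ← mem_weightedHomogeneousSubmodule]
  refine Submodule.sum_mem _ fun r _ => ?_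
  rw [mem_weightedHomogeneousSubmodule]
  have h1 : IsWeightedHomogeneous ww (X ((r, 1) : Fin m × Fin 2) : Rm m) (0, 1) := by
    have h0 := isWeightedHomogeneous_X ℂ ww ((r, 1) : Fin m × Fin 2)
    have : ww ((r, 1) : Fin m × Fin 2) = (0, 1) := by simp [ww]
    rwa [this] at h0
  have h2 : IsWeightedHomogeneous ww (pderiv ((r, 0) : Fin m × Fin 2) f) (a, b) := by
    apply wh_pderiv
    have he : ((a, b) : ℕ × ℕ) + ww ((r, 0) : Fin m × Fin 2) = (a + 1, b) := by
      simp [ww, Prod.ext_iff]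
    rw [he]; exact h
  have h3 := h1.mul h2
  have he2 : ((0, 1) : ℕ × ℕ) + (a, b) = (a, b + 1) := by
    simp [Prod.ext_iff, add_comm]
  rwa [he2] at h3

lemma wh_Om {f : Rm m} {a b : ℕ} (r s : Fin m)
    (h : IsWeightedHomogeneous ww f (a + 1, b + 1)) :
    IsWeightedHomogeneous ww (Om r s f) (a, b) := by
  rw [Om, ← mem_weightedHomogeneousSubmodule]
  refine Submodule.sub_mem _ ?_ ?_ <;> rw [mem_weightedHomogeneousSubmodule]
  · apply wh_pderiv
    have e1 : ((a, b) : ℕ × ℕ) + ww ((r, 0) : Fin m × Fin 2) = (a + 1, b) := by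
      simp [ww, Prod.ext_iff]
    rw [e1]
    apply wh_pderiv
    have e2 : ((a + 1, b) : ℕ × ℕ) + ww ((s, 1) : Fin m × Fin 2) = (a + 1, b + 1) := by
      simp [ww, Prod.ext_iff]
    rw [e2]; exact h
  · apply wh_pderiv
    have e1 : ((a, b) : ℕ × ℕ) + ww ((r, 1) : Fin m × Fin 2) = (a, b + 1) := by
      simp [ww, Prod.ext_iff]
    rw [e1]
    apply wh_pderiv
    have e2 : ((a, b + 1) : ℕ × ℕ) + ww ((s, 0) : Fin m × Fin 2) = (a + 1, b + 1) := by
      simp [ww, Prod.ext_iff]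
    rw [e2]; exact h

lemma base_case {f : Rm m} {b : ℕ} (h : IsWeightedHomogeneous ww f (0, b)) : f ∈ AA m := by
  classical
  rw [as_sum f]
  refine Subalgebra.sum_mem _ fun d hd => ?_
  have hd0 : ∀ r : Fin m, d (r, 0) = 0 := by
    have hsum := sum_u_of_wh h d hd
    intro r
    have hle : d (r, 0) ≤ ∑ r, d (r, 0) :=
      Finset.single_le_sum (f := fun r : Fin m => d (r, 0)) (fun _ _ => Nat.zero_le _)
        (mem_univ r)
    omega
  rw [monomial_eq]
  refine Subalgebra.mul_mem _ ?_ ?_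
  · have hC : (C (coeff d f) : Rm m) = algebraMap ℂ (Rm m) (coeff d f) := rfl
    rw [hC]; exact Subalgebra.algebraMap_mem _ _
  · rw [Finsupp.prod]
    refine Subalgebra.prod_mem _ fun p hp => ?_
    refine Subalgebra.pow_mem _ ?_ _
    obtain ⟨r, j⟩ := p
    fin_cases j
    · exfalso
      exact (Finsupp.mem_support_iff.mp hp) (hd0 r)
    · exact Algebra.subset_adjoin (Or.inl ⟨r, rfl⟩)

lemma key : ∀ a b : ℕ, ∀ f : Rm m, IsWeightedHomogeneous ww f (a, b) → DD m f = 0 → f ∈ AA m := by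
  intro a
  induction a with
  | zero => exact fun b f hf _ => base_case hf
  | succ a ih =>
    intro b f hf hD
    have hid := capelli a b f hf hD
    have hS : (∑ q ∈ univ.filter (fun q : Fin m × Fin m => q.1 < q.2),
        (X (q.1, 0) * X (q.2, 1) - X (q.1, 1) * X (q.2, 0)) * Om q.1 q.2 f) ∈ AA m := by
      refine Subalgebra.sum_mem _ fun q hq => ?_
      simp only [mem_filter, mem_univ, true_and] at hq
      refine Subalgebra.mul_mem _ ?_ ?_
      · exact Algebra.subset_adjoin (Or.inr ⟨q.1, q.2, hq, rfl⟩)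
      · rcases b with _ | b'
        · have h1 : pderiv ((q.2, 1) : Fin m × Fin 2) f = 0 :=
            pderiv_zero_of_wh 1 (sum_v_of_wh hf) q.2
          have hg : IsWeightedHomogeneous ww (pderiv ((q.2, 0) : Fin m × Fin 2) f) (a, 0) := by
            apply wh_pderiv
            have e1 : ((a, 0) : ℕ × ℕ) + ww ((q.2, 0) : Fin m × Fin 2) = (a + 1, 0) := by
              simp [ww, Prod.ext_iff]
            rw [e1]; exact hf
          have h2 : pderiv ((q.1, 1) : Fin m × Fin 2)
              (pderiv ((q.2, 0) : Fin m × Fin 2) f) = 0 :=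
            pderiv_zero_of_wh 1 (sum_v_of_wh hg) q.1
          have hz : Om q.1 q.2 f = 0 := by
            rw [Om, h1, map_zero, h2, sub_zero]
          rw [hz]; exact Subalgebra.zero_mem _
        · refine ih b' _ (wh_Om _ _ hf) ?_
          rw [DD_Om, hD]
          simp [Om]
    have hc : ((((a + 1) * (b + 1) : ℕ)) : ℂ) ≠ 0 := Nat.cast_ne_zero.mpr (by positivity)
    have hmem := Subalgebra.smul_mem (AA m) hS ((((a + 1) * (b + 1) : ℕ)) : ℂ)⁻¹
    rw [← hid, inv_smul_smul₀ hc] at hmem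
    exact hmem

lemma DD_wHC_eq (a b : ℕ) (f : Rm m) :
    DD m (weightedHomogeneousComponent ww (a + 1, b) f) =
      weightedHomogeneousComponent ww (a, b + 1) (DD m f) := by
  classical
  conv_lhs => rw [as_sum f]
  conv_rhs => rw [as_sum f]
  rw [map_sum, map_sum, map_sum, map_sum]
  refine Finset.sum_congr rfl fun d _ => ?_
  by_cases hw : (Finsupp.weight ww) d = ((a + 1 : ℕ), b)
  · rw [(isWeightedHomogeneous_monomial ww d (coeff d f) hw).weightedHomogeneousComponent_same]
    have hwh : IsWeightedHomogeneous ww (DD m (monomial d (coeff d f))) (a, b + 1) :=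
      wh_DD (isWeightedHomogeneous_monomial ww d (coeff d f) hw)
    rw [hwh.weightedHomogeneousComponent_same]
  · have hmono0 : IsWeightedHomogeneous ww (monomial d (coeff d f)) ((Finsupp.weight ww) d) :=
      isWeightedHomogeneous_monomial ww d (coeff d f) rfl
    rw [hmono0.weightedHomogeneousComponent_ne _ (Ne.symm hw), map_zero]
    by_cases h0 : ((Finsupp.weight ww) d).1 = 0
    · have hz : DD m (monomial d (coeff d f)) = 0 := by
        rw [DD_apply]
        refine Finset.sum_eq_zero fun r _ => ?_
        have hp : pderiv ((r, 0) : Fin m × Fin 2) (monomial d (coeff d f)) = 0 := by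
          apply pderiv_zero_of_wh 0
          intro d' hd'
          have hdd : d' = d := Finset.mem_singleton.mp (support_monomial_subset hd')
          subst hdd
          rw [weight_ww d'] at h0
          simpa using h0
        rw [hp, mul_zero]
      rw [hz, map_zero]
    · set W := (Finsupp.weight ww) d with hW
      have hW1 : W.1 - 1 + 1 = W.1 := by omega
      have he : W = (W.1 - 1 + 1, W.2) := by rw [hW1]
      have hmono : IsWeightedHomogeneous ww (monomial d (coeff d f)) (W.1 - 1 + 1, W.2) := by
        rw [← he]; exact hmono0
      have hwh := wh_DD hmono
      rw [hwh.weightedHomogeneousComponent_ne (a, b + 1) ?hne2]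
      case hne2 =>
        intro hcontra
        apply hw
        have h1 : a = W.1 - 1 := congrArg Prod.fst hcontra
        have h2 : b + 1 = W.2 + 1 := congrArg Prod.snd hcontra
        have h3 : W.2 = b := by omega
        rw [he, ← h1, h3]

lemma DD_wHC_zero {f : Rm m} (hD : DD m f = 0) (d : ℕ × ℕ) :
    DD m (weightedHomogeneousComponent ww d f) = 0 := by
  obtain ⟨a, b⟩ := d
  rcases a with _ | a
  · rw [DD_apply]
    refine Finset.sum_eq_zero fun r _ => ?_
    have hp : pderiv ((r, 0) : Fin m × Fin 2)
        (weightedHomogeneousComponent ww (0, b) f) = 0 := by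
      apply pderiv_zero_of_wh 0
      exact sum_u_of_wh (weightedHomogeneousComponent_isWeightedHomogeneous (0, b) f)
    rw [hp, mul_zero]
  · rw [DD_wHC_eq, hD, map_zero]

lemma mem_of_DD_zero {f : Rm m} (hD : DD m f = 0) : f ∈ AA m := by
  classical
  have hsum := sum_weightedHomogeneousComponent ww f
  rw [← hsum, finsum_eq_sum _ (weightedHomogeneousComponent_finsupp f)]
  refine Subalgebra.sum_mem _ fun d _ => ?_
  refine key d.1 d.2 _ ?_ (DD_wHC_zero hD d)
  have h := weightedHomogeneousComponent_isWeightedHomogeneous (w := ww) d f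
  have : ((d.1, d.2) : ℕ × ℕ) = d := rfl
  rwa [this]
lemma DD_mul_X (f : Rm m) (p : Fin m × Fin 2) :
    DD m (f * X p) = DD m f * X p + f * (if p.2 = 0 then (X (p.1, 1) : Rm m) else 0) := by
  classical
  rw [DD_apply, DD_apply]
  have hterm : ∀ r : Fin m, (X (r, 1) : Rm m) * pderiv ((r, 0) : Fin m × Fin 2) (f * X p)
      = X (r, 1) * pderiv (r, 0) f * X p
        + X (r, 1) * (f * pderiv ((r, 0) : Fin m × Fin 2) (X p)) := by
    intro r; rw [pderiv_mul]; ring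
  rw [Finset.sum_congr rfl fun r _ => hterm r, Finset.sum_add_distrib]
  congr 1
  · rw [Finset.sum_mul]
  · by_cases hp : p.2 = 0
    · obtain ⟨r0, j⟩ := p
      simp only at hp
      subst hp
      rw [if_pos rfl]
      rw [Finset.sum_eq_single r0]
      · rw [pderiv_X_self]; ring
      · intro r _ hr
        rw [pderiv_X_of_ne (by simp [Prod.ext_iff, Ne.symm hr]), mul_zero, mul_zero]
      · intro h; exact absurd (mem_univ r0) h
    · rw [if_neg hp, mul_zero]
      refine Finset.sum_eq_zero fun r _ => ?_
      rw [pderiv_X_of_ne (by rintro rfl; exact hp rfl), mul_zero, mul_zero]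

def gsub (m : ℕ) : Fin m × Fin 2 → Polynomial (Rm m) := fun p =>
  if p.2 = 0 then Polynomial.C (X (p.1, 0)) + Polynomial.X * Polynomial.C (X (p.1, 1))
  else Polynomial.C (X p)

def psi (m : ℕ) : Rm m →ₐ[ℂ] Polynomial (Rm m) := aeval (gsub m)

lemma psi_C (c : ℂ) : psi m (C c) = Polynomial.C (C c) := by
  rw [psi, aeval_C, Polynomial.algebraMap_apply]
  rfl

lemma eval_psi_eval (α : ℂ) (a : Fin m × Fin 2 → ℂ) (f : Rm m) :
    eval a ((psi m f).eval (C α)) =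
      eval (fun p : Fin m × Fin 2 => if p.2 = 0 then a (p.1, 0) + α * a (p.1, 1) else a p) f := by
  induction f using MvPolynomial.induction_on with
  | C c => rw [psi_C]; simp
  | add p q hp hq => rw [map_add, Polynomial.eval_add, map_add, map_add, hp, hq]
  | mul_X p i hp =>
      rw [map_mul, Polynomial.eval_mul, map_mul, map_mul, hp]
      refine congrArg₂ (· * ·) rfl ?_
      have hX : psi m (X i) = gsub m i := aeval_X _ i
      rw [hX, eval_X]
      obtain ⟨r, j⟩ := i
      fin_cases j
      · rw [gsub]
        simp
        ring
      · rw [gsub]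
        norm_num

lemma psi_eval_zero (f : Rm m) : (psi m f).eval 0 = f := by
  induction f using MvPolynomial.induction_on with
  | C c => rw [psi_C]; simp
  | add p q hp hq => rw [map_add, Polynomial.eval_add, hp, hq]
  | mul_X p i hp =>
      rw [map_mul, Polynomial.eval_mul, hp]
      congr 1
      have hX : psi m (X i) = gsub m i := aeval_X _ i
      rw [hX]
      obtain ⟨r, j⟩ := i
      fin_cases j
      · rw [gsub]
        simp
      · rw [gsub]
        norm_num

lemma deriv_psi (f : Rm m) : ((psi m f).derivative).eval 0 = DD m f := by
  induction f using MvPolynomial.induction_on with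
  | C c =>
      rw [psi_C, Polynomial.derivative_C]
      rw [DD_apply]
      simp [pderiv_C]
  | add p q hp hq => rw [map_add, Polynomial.derivative_add, Polynomial.eval_add, hp, hq, map_add]
  | mul_X p i hp =>
      rw [map_mul, Polynomial.derivative_mul, Polynomial.eval_add, Polynomial.eval_mul,
        Polynomial.eval_mul, hp, psi_eval_zero, psi_eval_zero, DD_mul_X]
      congr 1
      refine congrArg₂ (· * ·) rfl ?_
      have hX : psi m (X i) = gsub m i := aeval_X _ i
      rw [hX]
      obtain ⟨r, j⟩ := i
      fin_cases j
      · rw [gsub]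
        simp
      · rw [gsub]
        norm_num

lemma invariant_of_mem {f : Rm m} (hf : f ∈ AA m) (α : ℂ) (a : Fin m × Fin 2 → ℂ) :
    eval (fun p : Fin m × Fin 2 => if p.2 = 0 then a (p.1, 0) + α * a (p.1, 1) else a p) f
      = eval a f := by
  induction hf using Algebra.adjoin_induction with
  | mem x hx =>
      rcases hx with ⟨r, rfl⟩ | ⟨r, s, _, rfl⟩
      · rw [eval_X, eval_X, if_neg (by simp)]
      · simp only [map_sub, map_mul, eval_X]
        norm_num
        ring
  | algebraMap c => rw [MvPolynomial.algebraMap_eq, eval_C, eval_C]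
  | add x y _ _ hx hy => rw [map_add, map_add, hx, hy]
  | mul x y _ _ hx hy => rw [map_mul, map_mul, hx, hy]

lemma DD_of_invariant {f : Rm m}
    (hyp : ∀ (α : ℂ) (a : Fin m × Fin 2 → ℂ),
      eval (fun p : Fin m × Fin 2 => if p.2 = 0 then a (p.1, 0) + α * a (p.1, 1) else a p) f
        = eval a f) :
    DD m f = 0 := by
  have hpsi : psi m f = Polynomial.C f := by
    have hroot : ∀ α : ℂ, (psi m f - Polynomial.C f).IsRoot (C α : Rm m) := by
      intro α
      have h1 : ((psi m f).eval (C α : Rm m)) = f := by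
        apply MvPolynomial.funext
        intro a
        rw [eval_psi_eval]
        exact hyp α a
      simp [Polynomial.IsRoot, h1]
    have hinf : Set.Infinite {x : Rm m | (psi m f - Polynomial.C f).IsRoot x} := by
      exact Set.infinite_of_injective_forall_mem
        (f := fun α : ℂ => (C α : Rm m)) (C_injective _ _) hroot
    have hzero := Polynomial.eq_zero_of_infinite_isRoot _ hinf
    have := sub_eq_zero.mp hzero
    exact this
  have hD := deriv_psi f
  rw [hpsi, Polynomial.derivative_C] at hD
  simpa using hD.symm

end UnipotentAux

end

open UnipotentAux in
/-- For `V = ℂ²` and `G` the group of unipotent upper-triangular matrices `[[1,α],[0,1]]`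
acting diagonally on `Vᵐ`, a polynomial in the coordinates `x_{r,i}` (`r : Fin m`,
`i : Fin 2`) is `G`-invariant iff it lies in the subalgebra generated by the second
coordinates `x_{r,2}` and the determinants `x_{r,1}x_{s,2} − x_{r,2}x_{s,1}` (`r < s`). -/
theorem unipotent_invariants_of_pairs (m : ℕ) (f : MvPolynomial (Fin m × Fin 2) ℂ) :
    (∀ (α : ℂ) (a : Fin m × Fin 2 → ℂ),
      MvPolynomial.eval
        (fun p => if p.2 = 0 then a (p.1, 0) + α * a (p.1, 1) else a p) f =
      MvPolynomial.eval a f) ↔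
    f ∈ Algebra.adjoin ℂ
      ((Set.range fun r : Fin m => (X (r, 1) : MvPolynomial (Fin m × Fin 2) ℂ)) ∪
       {q | ∃ r s : Fin m, r < s ∧
          q = X (r, 0) * X (s, 1) - X (r, 1) * X (s, 0)}) := by
  constructor
  · intro hyp
    exact mem_of_DD_zero (DD_of_invariant hyp)
  · intro hf α a
    exact invariant_of_mem hf α a
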